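/- Let $a_1,\ldots,a_n$ be nonnegative integers with $\max_i a_i > 0$, and let $Y_1,\ldots,Y_n$ be i.i.d. Rademacher random variables. Then $\mathbb{P}\left(\sum_{k=1}^n a_k Y_k > 0\right) \geq 1/4$. -/

import Mathlib

open MeasureTheory ProbabilityTheory Finset

/-- Lemma 2.1 (2.4): If `a₁,…,aₙ` are nonnegative integers, not all zero, and
`Y₁,…,Yₙ` are i.i.d. Rademacher random variables, then `ℙ(∑ aₖ Yₖ > 0) ≥ 1/4`. -/
theorem rademacher_weighted_sum_pos_ge_quarter
    {Ω : Type*} [MeasureSpace Ω] [IsProbabilityMeasure (ℙ : Measure Ω)]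
    {n : ℕ} (a : Fin n → ℤ) (ha : ∀ k, 0 ≤ a k) (ha' : ∃ k, 0 < a k)
    (Y : Fin n → Ω → ℤ) (hmeas : ∀ k, Measurable (Y k))
    (hindep : iIndepFun Y ℙ)
    (hplus : ∀ k, ℙ {ω | Y k ω = 1} = 1/2)
    (hminus : ∀ k, ℙ {ω | Y k ω = -1} = 1/2) :
    (1/4 : ENNReal) ≤ ℙ {ω | 0 < ∑ k, a k * Y k ω} := by
  classical
  obtain ⟨k₀, hk₀⟩ := ha'
  set v : (Fin n → Bool) → (Fin n → ℤ) := fun ε k => if ε k then 1 else -1 with hv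
  set c : (Fin n → ℤ) → ℤ := fun x => ∑ k, a k * x k with hc
  set Yv : Ω → (Fin n → ℤ) := fun ω k => Y k ω with hYv
  have hYvm : Measurable Yv := measurable_pi_lambda _ hmeas
  set P : ℤ → ENNReal := fun z => if z = 1 ∨ z = -1 then (1/2 : ENNReal) else 0 with hP
  -- coordinate probabilities
  have hpre1 : ∀ k, ℙ (Y k ⁻¹' {1}) = 1/2 := fun k => hplus k
  have hpre2 : ∀ k, ℙ (Y k ⁻¹' {-1}) = 1/2 := fun k => hminus k
  have hzero : ∀ k z, z ≠ 1 → z ≠ -1 → ℙ (Y k ⁻¹' {z}) = 0 := by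
    intro k z hz1 hz2
    have hdis : Disjoint (Y k ⁻¹' {1}) (Y k ⁻¹' {-1}) := by
      rw [Set.disjoint_left]
      intro ω h1 h2
      simp only [Set.mem_preimage, Set.mem_singleton_iff] at h1 h2
      omega
    have hu : ℙ (Y k ⁻¹' {1} ∪ Y k ⁻¹' {-1}) = 1 := by
      rw [measure_union hdis ((hmeas k) (measurableSet_singleton _)), hpre1, hpre2]
      rw [ENNReal.add_halves]
    have hc0 : ℙ ((Y k ⁻¹' {1} ∪ Y k ⁻¹' {-1})ᶜ) = 0 := by
      have := measure_compl (s := Y k ⁻¹' {1} ∪ Y k ⁻¹' {-1})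
        (((hmeas k) (measurableSet_singleton _)).union
        ((hmeas k) (measurableSet_singleton _))) (measure_ne_top ℙ _)
      rw [hu, measure_univ] at this
      simpa using this
    refine measure_mono_null ?_ hc0
    intro ω hω
    simp only [Set.mem_preimage, Set.mem_singleton_iff] at hω
    simp only [Set.mem_compl_iff, Set.mem_union, Set.mem_preimage, Set.mem_singleton_iff]
    omega
  have hfac : ∀ k (z : ℤ), ℙ (Y k ⁻¹' {z}) = P z := by
    intro k z
    by_cases h1 : z = 1
    · subst h1; simp [P, hpre1 k]
    by_cases h2 : z = -1
    · subst h2; simp [P, hpre2 k]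
    · rw [hzero k z h1 h2]; simp [P, h1, h2]
  -- singleton values of the pushforward measure
  have hsing : ∀ x : Fin n → ℤ, Measure.map Yv ℙ {x} = ∏ k, P (x k) := by
    intro x
    rw [Measure.map_apply hYvm (measurableSet_singleton x)]
    have hset : Yv ⁻¹' {x} = ⋂ k ∈ Finset.univ, Y k ⁻¹' {x k} := by
      ext ω
      simp [Yv, funext_iff]
    rw [hset,
      hindep.measure_inter_preimage_eq_mul Finset.univ
        (sets := fun k => ({x k} : Set ℤ)) (fun _ _ => measurableSet_singleton _)]
    exact Finset.prod_congr rfl fun k _ => hfac k (x k)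
  -- the pushforward measure is the uniform measure on sign vectors
  have hmap : Measure.map Yv ℙ
      = ∑ ε ∈ (Finset.univ : Finset (Fin n → Bool)),
          ((1/2 : ENNReal) ^ n) • Measure.dirac (v ε) := by
    apply Measure.ext_of_singleton
    intro x
    rw [hsing, Measure.finset_sum_apply]
    simp only [Measure.smul_apply, Measure.dirac_apply, smul_eq_mul]
    by_cases hx : ∀ k, x k = 1 ∨ x k = -1
    · have hL : ∏ k, P (x k) = (1/2 : ENNReal) ^ n := by
        have hPk : ∀ k, P (x k) = (1/2 : ENNReal) := fun k => by simp [P, hx k]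
        simp only [hPk]
        simp
      set ε₀ : Fin n → Bool := fun k => decide (x k = 1) with hε₀
      have hveq : ∀ ε, v ε = x ↔ ε = ε₀ := by
        intro ε
        rw [funext_iff, funext_iff]
        apply forall_congr'
        intro k
        rcases hx k with h | h <;> cases hεk : ε k <;>
          simp [v, h, hε₀, hεk] <;> omega
      have hR : ∀ ε : Fin n → Bool,
          (1/2 : ENNReal) ^ n * ({x} : Set (Fin n → ℤ)).indicator 1 (v ε)
            = if ε = ε₀ then (1/2 : ENNReal) ^ n else 0 := by
        intro ε
        rw [Set.indicator_apply]
        simp only [Set.mem_singleton_iff, hveq ε]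
        by_cases h : ε = ε₀ <;> simp [h]
      rw [Finset.sum_congr rfl fun ε _ => hR ε, Finset.sum_ite_eq' Finset.univ ε₀]
      simp [hL]
    · push_neg at hx
      obtain ⟨k, hk1, hk2⟩ := hx
      have hL : ∏ j, P (x j) = 0 :=
        Finset.prod_eq_zero (Finset.mem_univ k) (by simp [P, hk1, hk2])
      have hR : ∀ ε : Fin n → Bool,
          (1/2 : ENNReal) ^ n * ({x} : Set (Fin n → ℤ)).indicator 1 (v ε) = 0 := by
        intro ε
        have : v ε ≠ x := by
          intro h
          have := congrFun h k
          by_cases hεk : ε k <;> simp [v, hεk] at this <;> omega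
        simp [Set.indicator_apply, this]
      rw [Finset.sum_congr rfl fun ε _ => hR ε]
      simp [hL]
  -- counting formula
  have hcount : ∀ A : Set (Fin n → ℤ),
      ℙ (Yv ⁻¹' A)
        = (1/2 : ENNReal) ^ n * ((Finset.univ.filter fun ε => v ε ∈ A).card : ENNReal) := by
    intro A
    rw [← Measure.map_apply hYvm .of_discrete, hmap, Measure.finset_sum_apply]
    simp only [Measure.smul_apply, Measure.dirac_apply, smul_eq_mul]
    have : ∀ ε : Fin n → Bool,
        (1/2 : ENNReal) ^ n * A.indicator 1 (v ε)
          = if v ε ∈ A then (1/2 : ENNReal) ^ n else 0 := by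
      intro ε
      rw [Set.indicator_apply]
      by_cases h : v ε ∈ A <;> simp [h]
    rw [Finset.sum_congr rfl fun ε _ => this ε, ← Finset.sum_filter,
      Finset.sum_const, nsmul_eq_mul, mul_comm]
  -- combinatorics
  set Np := (Finset.univ.filter fun ε : Fin n → Bool => 0 < c (v ε)).card with hNp
  set Nn := (Finset.univ.filter fun ε : Fin n → Bool => c (v ε) < 0).card with hNn
  set Nz := (Finset.univ.filter fun ε : Fin n → Bool => c (v ε) = 0).card with hNz
  have hflip : ∀ ε : Fin n → Bool, c (v (fun k => !ε k)) = - c (v ε) := by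
    intro ε
    rw [hc, ← Finset.sum_neg_distrib]
    apply Finset.sum_congr rfl
    intro k _
    cases hεk : ε k <;> simp [v, hεk]
  have hposneg : Np = Nn := by
    apply Finset.card_nbij' (fun ε k => !ε k) (fun ε k => !ε k)
    · intro ε hε
      simp only [Finset.mem_coe, Finset.mem_filter, Finset.mem_univ, true_and] at hε ⊢
      rw [hflip]; omega
    · intro ε hε
      simp only [Finset.mem_coe, Finset.mem_filter, Finset.mem_univ, true_and] at hε ⊢
      rw [hflip]; omega
    · intro ε _; funext k; simp
    · intro ε _; funext k; simp
  set φ : (Fin n → Bool) → (Fin n → Bool) := fun ε k => if k = k₀ then !ε k else ε k with hφ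
  have hφφ : ∀ ε, φ (φ ε) = ε := by
    intro ε; funext k; by_cases h : k = k₀ <;> simp [φ, h]
  have hφc : ∀ ε, c (v (φ ε)) = c (v ε) + a k₀ * (v (φ ε) k₀ - v ε k₀) := by
    intro ε
    have : c (v (φ ε)) - c (v ε) = a k₀ * (v (φ ε) k₀ - v ε k₀) := by
      rw [hc, ← Finset.sum_sub_distrib]
      rw [Finset.sum_eq_single k₀]
      · ring
      · intro k _ hk
        have hfk : φ ε k = ε k := if_neg hk
        simp [v, hfk]
      · intro h; exact absurd (Finset.mem_univ k₀) h
    omega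
  have hφk₀ : ∀ ε : Fin n → Bool, v (φ ε) k₀ = - v ε k₀ := by
    intro ε
    cases hεk : ε k₀ <;> simp [v, φ, hεk]
  have hφne : ∀ ε : Fin n → Bool, c (v ε) = 0 → c (v (φ ε)) ≠ 0 := by
    intro ε h0
    rw [hφc ε, h0, hφk₀ ε]
    have : v ε k₀ = 1 ∨ v ε k₀ = -1 := by cases hεk : ε k₀ <;> simp [v, hεk]
    rcases this with h | h <;> rw [h] <;> nlinarith
  have hzle : Nz ≤ (Finset.univ.filter fun ε : Fin n → Bool => ¬ c (v ε) = 0).card := by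
    apply Finset.card_le_card_of_injOn φ
    · intro ε hε
      simp only [Finset.mem_coe, Finset.mem_filter, Finset.mem_univ, true_and] at hε ⊢
      exact hφne ε hε
    · intro ε₁ _ ε₂ _ h
      have := congrArg φ h
      rwa [hφφ, hφφ] at this
  have hcard : Fintype.card (Fin n → Bool) = 2 ^ n := by simp
  have hz2 : 2 * Nz ≤ 2 ^ n := by
    have := Finset.card_filter_add_card_filter_not
      (s := (Finset.univ : Finset (Fin n → Bool))) (p := fun ε => c (v ε) = 0)
    rw [Finset.card_univ, hcard] at this
    omega
  have htot : Np + Nn + Nz = 2 ^ n := by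
    have h1 := Finset.card_filter_add_card_filter_not
      (s := (Finset.univ : Finset (Fin n → Bool))) (p := fun ε => 0 < c (v ε))
    rw [Finset.card_univ, hcard] at h1
    have h2 : (Finset.univ.filter fun ε : Fin n → Bool => ¬ 0 < c (v ε)).card = Nn + Nz := by
      rw [hNn, hNz, ← Finset.card_union_of_disjoint]
      · rw [← Finset.filter_or]
        apply congrArg
        apply Finset.filter_congr
        intro ε _
        constructor
        · intro h; omega
        · intro h; omega
      · rw [Finset.disjoint_filter]
        intro ε _ h
        omega
    omega
  have hkey : 2 ^ n ≤ 4 * Np := by omega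
  -- conclude
  have hset : {ω | 0 < ∑ k, a k * Y k ω} = Yv ⁻¹' {x | 0 < c x} := rfl
  have hgoal : ℙ {ω | 0 < ∑ k, a k * Y k ω} = (1/2 : ENNReal) ^ n * (Np : ENNReal) := by
    rw [hset, hcount {x | 0 < c x}]
    congr 2
    simp only [Set.mem_setOf_eq, hNp]
  rw [hgoal]
  have hkey' : (2 : ENNReal) ^ n ≤ 4 * (Np : ENNReal) := by
    calc (2 : ENNReal) ^ n = ((2 ^ n : ℕ) : ENNReal) := by push_cast; ring
    _ ≤ ((4 * Np : ℕ) : ENNReal) := Nat.cast_le.mpr hkey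
    _ = 4 * (Np : ENNReal) := by push_cast; ring
  have h2n : (1/2 : ENNReal) ^ n * 2 ^ n = 1 := by
    rw [← mul_pow, one_div, ENNReal.inv_mul_cancel two_ne_zero ENNReal.ofNat_ne_top, one_pow]
  calc (1/4 : ENNReal) = (1/2 : ENNReal) ^ n * 2 ^ n * (1/4) := by rw [h2n, one_mul]
    _ = (1/2 : ENNReal) ^ n * (2 ^ n * (1/4)) := by ring
    _ ≤ (1/2 : ENNReal) ^ n * ((4 * (Np : ENNReal)) * (1/4)) := by
        gcongr
    _ = (1/2 : ENNReal) ^ n * ((Np : ENNReal) * (4 * (1/4))) := by ring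
    _ = (1/2 : ENNReal) ^ n * (Np : ENNReal) := by
        rw [show (4 : ENNReal) * (1/4) = 1 by
          rw [one_div, ENNReal.mul_inv_cancel (by norm_num) (by norm_num)], mul_one]
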